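/- In the Kiselman semigroup K_n, for any index i and any word w in the generators a_1,...,a_{i-1} (i.e. generators with indices strictly smaller than i), the identity a_i · w · a_i = a_i · w holds. -/

import Mathlib

/-- The defining relations of the Kiselman semigroup `K_n`:
`aᵢ² = aᵢ`, and `aᵢaⱼaᵢ = aⱼaᵢaⱼ = aⱼaᵢ` for `i < j`. -/
inductive KisRel (n : ℕ) : FreeMonoid (Fin n) → FreeMonoid (Fin n) → Prop
  | idem (i : Fin n) : KisRel n (.of i * .of i) (.of i)
  | braid₁ {i j : Fin n} (h : i < j) :
      KisRel n (.of i * .of j * .of i) (.of j * .of i)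
  | braid₂ {i j : Fin n} (h : i < j) :
      KisRel n (.of j * .of i * .of j) (.of j * .of i)

/-- The Kiselman semigroup (monoid) `K_n`. -/
abbrev Kiselman (n : ℕ) := PresentedMonoid (KisRel n)

/-- The canonical projection from the free monoid on the generators to `K_n`. -/
def kmk (n : ℕ) : FreeMonoid (Fin n) →* Kiselman n := PresentedMonoid.mk (KisRel n)

/-- The generator `a_{i+1}` (0-indexed: `ka i` is the paper's `a_{i+1}`). -/
def ka {n : ℕ} (i : Fin n) : Kiselman n := PresentedMonoid.of (KisRel n) i

/-- The idempotent `e_X`: the product of the generators indexed by `X` in strictly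
decreasing order of indices. -/
def eX {n : ℕ} (X : Finset (Fin n)) : Kiselman n :=
  kmk n (FreeMonoid.ofList ((X.sort (· ≤ ·)).reverse))

theorem ksound {n : ℕ} {a b : FreeMonoid (Fin n)} (h : KisRel n a b) : kmk n a = kmk n b :=
  Quotient.sound (ConGen.Rel.of _ _ h)

theorem krel {n : ℕ} {j i : Fin n} (h : j < i) : ka i * ka j * ka i = ka i * ka j :=
  ksound (KisRel.braid₂ h)

theorem kidem {n : ℕ} (i : Fin n) : ka i * ka i = ka i := ksound (KisRel.idem i)

theorem kiselman_left_absorb (n : ℕ) (i : Fin n) (w : FreeMonoid (Fin n))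
    (hw : ∀ j ∈ w.toList, j < i) :
    ka i * kmk n w * ka i = ka i * kmk n w := by
  induction w using FreeMonoid.inductionOn' with
  | one => simpa using kidem i
  | of_mul j w ih =>
      have hj : j < i := hw j (by simp)
      have ih' := ih (fun k hk => hw k (by simp [hk]))
      have h1 : (kmk n (FreeMonoid.of j * w)) = ka j * kmk n w := by
        simp [kmk, ka, PresentedMonoid.of]
      rw [h1, show ka i * (ka j * kmk n w) = (ka i * ka j) * kmk n w by group,
        ← krel hj]
      calc ka i * ka j * ka i * kmk n w * ka i
          = (ka i * ka j) * (ka i * kmk n w * ka i) := by group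
        _ = (ka i * ka j) * (ka i * kmk n w) := by rw [ih']
        _ = ka i * ka j * ka i * kmk n w := by group
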